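/- Let λ₀ : [0,∞) → (0,∞), s₁, s₀ : [0,∞) → (0,1] with s₁ s₀ > 0 on [0,T], ψ₀ ∈ ℝ, λ₁(y) = e^{ψ₀} λ₀(y), and h(1)h(0) < 0. Define G(ψ) = ∫₀^T [ h(1)λ₁(y)s₁(y) − ( h(1)λ₁(y)s₁(y) − h(0)λ₀(y)s₀(y) ) h(1) e^ψ s₁(y) / ( h(1)e^ψ s₁(y) − h(0)s₀(y) ) ] dy. Then G is strictly monotone in ψ (its derivative has constant nonzero sign), and hence ψ₀ is the unique solution of G(ψ) = 0. -/

import Mathlib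

open Real intervalIntegral

private lemma flip_aux (X W Y Z : ℝ) :
    (-X - (-X - -W) * -Y / (-Y - -Z)) = -(X - (X - W) * Y / (Y - Z)) := by
  rw [show (-X - -W) = -(X - W) by ring, show (-Y - -Z) = -(Y - Z) by ring,
    neg_mul_neg, div_neg]
  ring

private lemma aux_pos_neg
    (lam₀ s₁ s₀ : ℝ → ℝ) (T ψ₀ h1 h0 : ℝ) (hT : 0 < T)
    (hlam₀ : ∀ y ∈ Set.Icc 0 T, 0 < lam₀ y)
    (hs₁ : ∀ y ∈ Set.Icc 0 T, s₁ y ∈ Set.Ioc (0 : ℝ) 1)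
    (hs₀ : ∀ y ∈ Set.Icc 0 T, s₀ y ∈ Set.Ioc (0 : ℝ) 1)
    (hcl : ContinuousOn lam₀ (Set.Icc 0 T))
    (hcs₁ : ContinuousOn s₁ (Set.Icc 0 T))
    (hcs₀ : ContinuousOn s₀ (Set.Icc 0 T))
    (hh1 : 0 < h1) (hh0 : h0 < 0)
    (lam₁ : ℝ → ℝ) (hph : ∀ y, lam₁ y = Real.exp ψ₀ * lam₀ y)
    (G : ℝ → ℝ)
    (hG : ∀ ψ, G ψ = ∫ y in (0:ℝ)..T,
      (h1 * lam₁ y * s₁ y -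
        (h1 * lam₁ y * s₁ y - h0 * lam₀ y * s₀ y) * (h1 * Real.exp ψ * s₁ y) /
          (h1 * Real.exp ψ * s₁ y - h0 * s₀ y))) :
    StrictAnti G ∧ ∀ ψ, G ψ = 0 ↔ ψ = ψ₀ := by
  set den : ℝ → ℝ → ℝ := fun ψ y => h1 * Real.exp ψ * s₁ y - h0 * s₀ y with hden_def
  have hden : ∀ ψ, ∀ y ∈ Set.Icc 0 T, 0 < den ψ y := by
    intro ψ y hy
    have h1' := mul_pos (mul_pos hh1 (Real.exp_pos ψ)) (hs₁ y hy).1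
    have h2' := mul_pos (neg_pos.mpr hh0) (hs₀ y hy).1
    simp only [hden_def]
    nlinarith
  set F : ℝ → ℝ → ℝ := fun ψ y =>
    h1 * h0 * lam₀ y * s₁ y * s₀ y * (Real.exp ψ - Real.exp ψ₀) / den ψ y with hF_def
  have hFeq : ∀ ψ, ∀ y ∈ Set.Icc 0 T,
      (h1 * lam₁ y * s₁ y -
        (h1 * lam₁ y * s₁ y - h0 * lam₀ y * s₀ y) * (h1 * Real.exp ψ * s₁ y) /
          (h1 * Real.exp ψ * s₁ y - h0 * s₀ y)) = F ψ y := by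
    intro ψ y hy
    have hd := ne_of_gt (hden ψ y hy)
    simp only [hF_def, hden_def] at hd ⊢
    rw [hph]
    rw [eq_div_iff hd, sub_mul, div_mul_cancel₀ _ hd]
    ring
  have hGF : ∀ ψ, G ψ = ∫ y in (0:ℝ)..T, F ψ y := by
    intro ψ
    rw [hG]
    apply intervalIntegral.integral_congr
    intro y hy
    rw [Set.uIcc_of_le hT.le] at hy
    exact hFeq ψ y hy
  have hdenc : ∀ ψ, ContinuousOn (fun y => den ψ y) (Set.Icc 0 T) := by
    intro ψ
    simp only [hden_def]
    exact (continuousOn_const.mul hcs₁).sub (continuousOn_const.mul hcs₀)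
  have hFc : ∀ ψ, ContinuousOn (F ψ) (Set.Icc 0 T) := by
    intro ψ
    simp only [hF_def]
    exact (((((continuousOn_const.mul hcl).mul hcs₁).mul hcs₀).mul
      continuousOn_const).div (hdenc ψ) (fun y hy => ne_of_gt (hden ψ y hy)))
  have hInt : ∀ ψ, IntervalIntegrable (F ψ) MeasureTheory.volume 0 T := by
    intro ψ
    have h := hFc ψ
    rw [← Set.uIcc_of_le hT.le] at h
    exact h.intervalIntegrable
  have hanti : StrictAnti G := by
    intro a b hab
    have hkey : ∀ y ∈ Set.Icc 0 T, 0 < F a y - F b y := by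
      intro y hy
      have hda := hden a y hy
      have hdb := hden b y hy
      have hd0 := hden ψ₀ y hy
      have hl := hlam₀ y hy
      have hs1 := (hs₁ y hy).1
      have hs0 := (hs₀ y hy).1
      have hdiff : F a y - F b y =
          (-(h1 * h0)) * lam₀ y * s₁ y * s₀ y * (Real.exp b - Real.exp a) *
            den ψ₀ y / (den a y * den b y) := by
        have hda' := ne_of_gt hda
        have hdb' := ne_of_gt hdb
        simp only [hF_def, hden_def] at hda' hdb' ⊢
        rw [div_sub_div _ _ hda' hdb', div_eq_div_iff (mul_ne_zero hda' hdb') (mul_ne_zero hda' hdb')]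
        ring
      rw [hdiff]
      apply div_pos _ (mul_pos hda hdb)
      have hC : 0 < -(h1 * h0) := by nlinarith
      have hexp : 0 < Real.exp b - Real.exp a :=
        sub_pos.mpr (Real.exp_lt_exp.mpr hab)
      exact mul_pos (mul_pos (mul_pos (mul_pos (mul_pos hC hl) hs1) hs0) hexp) hd0
    have hpos : 0 < ∫ y in (0:ℝ)..T, (F a y - F b y) := by
      apply intervalIntegral.intervalIntegral_pos_of_pos_on
        ((hInt a).sub (hInt b))
        (fun y hy => hkey y ⟨le_of_lt hy.1, le_of_lt hy.2⟩) hT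
    have : 0 < G a - G b := by
      rw [hGF a, hGF b, ← intervalIntegral.integral_sub (hInt a) (hInt b)]
      exact hpos
    linarith
  have hG0 : G ψ₀ = 0 := by
    rw [hGF]
    simp [hF_def]
  refine ⟨hanti, fun ψ => ⟨fun h => ?_, fun h => by rw [h]; exact hG0⟩⟩
  exact hanti.injective (h.trans hG0.symm)

/-- Uniqueness claim from the proof of Theorem 1: the population estimating
function G is strictly monotone in ψ and hence has the true value ψ₀ as its
unique root. -/
theorem unique_root_of_population_estimating_equation
    (lam₀ s₁ s₀ : ℝ → ℝ) (T ψ₀ h1 h0 : ℝ) (hT : 0 < T)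
    (hlam₀ : ∀ y ∈ Set.Icc 0 T, 0 < lam₀ y)
    (hs₁ : ∀ y ∈ Set.Icc 0 T, s₁ y ∈ Set.Ioc (0 : ℝ) 1)
    (hs₀ : ∀ y ∈ Set.Icc 0 T, s₀ y ∈ Set.Ioc (0 : ℝ) 1)
    (hprod : ∀ y ∈ Set.Icc 0 T, 0 < s₁ y * s₀ y)
    (hcl : ContinuousOn lam₀ (Set.Icc 0 T))
    (hcs₁ : ContinuousOn s₁ (Set.Icc 0 T))
    (hcs₀ : ContinuousOn s₀ (Set.Icc 0 T))
    (hh : h1 * h0 < 0)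
    (lam₁ : ℝ → ℝ) (hph : ∀ y, lam₁ y = Real.exp ψ₀ * lam₀ y)
    (G : ℝ → ℝ)
    (hG : ∀ ψ, G ψ = ∫ y in (0:ℝ)..T,
      (h1 * lam₁ y * s₁ y -
        (h1 * lam₁ y * s₁ y - h0 * lam₀ y * s₀ y) * (h1 * Real.exp ψ * s₁ y) /
          (h1 * Real.exp ψ * s₁ y - h0 * s₀ y))) :
    (StrictMono G ∨ StrictAnti G) ∧ ∀ ψ, G ψ = 0 ↔ ψ = ψ₀ := by
  rcases lt_trichotomy h1 0 with hneg | hzero | hpos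
  · -- h1 < 0, hence h0 > 0; apply the lemma to (-h1, -h0, -G)
    have hh0 : 0 < h0 := by nlinarith
    have hG' : ∀ ψ, (fun ψ => -G ψ) ψ = ∫ y in (0:ℝ)..T,
        ((-h1) * lam₁ y * s₁ y -
          ((-h1) * lam₁ y * s₁ y - (-h0) * lam₀ y * s₀ y) * ((-h1) * Real.exp ψ * s₁ y) /
            ((-h1) * Real.exp ψ * s₁ y - (-h0) * s₀ y)) := by
      intro ψ
      have hpt : ∀ y : ℝ,
          ((-h1) * lam₁ y * s₁ y -
            ((-h1) * lam₁ y * s₁ y - (-h0) * lam₀ y * s₀ y) * ((-h1) * Real.exp ψ * s₁ y) /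
              ((-h1) * Real.exp ψ * s₁ y - (-h0) * s₀ y)) =
          -(h1 * lam₁ y * s₁ y -
            (h1 * lam₁ y * s₁ y - h0 * lam₀ y * s₀ y) * (h1 * Real.exp ψ * s₁ y) /
              (h1 * Real.exp ψ * s₁ y - h0 * s₀ y)) := by
        intro y
        rw [show (-h1) * lam₁ y * s₁ y = -(h1 * lam₁ y * s₁ y) by ring,
          show (-h0) * lam₀ y * s₀ y = -(h0 * lam₀ y * s₀ y) by ring,
          show (-h1) * Real.exp ψ * s₁ y = -(h1 * Real.exp ψ * s₁ y) by ring,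
          show (-h0) * s₀ y = -(h0 * s₀ y) by ring]
        exact flip_aux _ _ _ _
      simp only [hpt]
      rw [intervalIntegral.integral_neg, ← hG ψ]
    obtain ⟨hanti, hroot⟩ := aux_pos_neg lam₀ s₁ s₀ T ψ₀ (-h1) (-h0) hT hlam₀ hs₁ hs₀
      hcl hcs₁ hcs₀ (neg_pos.mpr hneg) (neg_neg_iff_pos.mpr hh0) lam₁ hph
      (fun ψ => -G ψ) hG'
    refine ⟨Or.inl ?_, fun ψ => ?_⟩
    · intro a b hab
      have := hanti hab
      simpa using this
    · rw [← neg_eq_zero]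
      exact hroot ψ
  · exfalso; rw [hzero, zero_mul] at hh; exact lt_irrefl 0 hh
  · have hh0 : h0 < 0 := by nlinarith
    obtain ⟨hanti, hroot⟩ := aux_pos_neg lam₀ s₁ s₀ T ψ₀ h1 h0 hT hlam₀ hs₁ hs₀
      hcl hcs₁ hcs₀ hpos hh0 lam₁ hph G hG
    exact ⟨Or.inr hanti, hroot⟩
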